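/- For every N ≥ 0 and every m ∈ {1, 2, 3}, PPL_t(4N + m) = min(PPL_t(4N + m − 1), PPL_t(4N + m + 1)) + 1, where PPL_t(0) = 0. -/

import Mathlib

/-- The Thue–Morse word: `tm n` is the number of ones (sum of binary digits)
in the binary expansion of `n`, taken mod 2. -/
def tm (n : ℕ) : ℕ := (Nat.digits 2 n).sum % 2

/-- `ps` is a factorization of the finite word `w` into nonempty palindromes. -/
def IsPalDecomp (w : List ℕ) (ps : List (List ℕ)) : Prop :=
  ps.flatten = w ∧ ∀ p ∈ ps, p ≠ [] ∧ p.Palindrome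

/-- The palindromic length of a finite word: the least number of nonempty
palindromes whose concatenation is the word (0 for the empty word). -/
noncomputable def palLen (w : List ℕ) : ℕ :=
  sInf {k | ∃ ps, ps.length = k ∧ IsPalDecomp w ps}

/-- `pplTM n` is the palindromic length of the prefix of length `n`
of the Thue–Morse word. -/
noncomputable def pplTM (n : ℕ) : ℕ := palLen ((List.range n).map tm)

/-! ### Arithmetic facts about `tm` -/

lemma tm_lt_two (n : ℕ) : tm n < 2 := Nat.mod_lt _ (by norm_num)

lemma tm_two_mul (k : ℕ) : tm (2 * k) = tm k := by
  rcases Nat.eq_zero_or_pos k with rfl | hk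
  · rfl
  · unfold tm
    rw [Nat.digits_def' (by norm_num : (1:ℕ) < 2) (by omega)]
    simp [Nat.mul_div_cancel_left _ (by norm_num : (0:ℕ) < 2)]

lemma tm_two_mul_add_one (k : ℕ) : tm (2 * k + 1) + tm k = 1 := by
  unfold tm
  rw [Nat.digits_def' (by norm_num : (1:ℕ) < 2) (by omega)]
  have h1 : (2 * k + 1) % 2 = 1 := by omega
  have h2 : (2 * k + 1) / 2 = k := by omega
  rw [h1, h2]
  simp only [List.sum_cons]
  omega

lemma tm_adj {i : ℕ} (h : tm i = tm (i + 1)) : i % 2 = 1 := by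
  rcases Nat.even_or_odd i with ⟨k, hk⟩ | ⟨k, hk⟩
  · subst hk
    rw [show k + k = 2 * k by ring] at h ⊢
    have h1 := tm_two_mul k
    have h2 := tm_two_mul_add_one k
    have := tm_lt_two k
    omega
  · omega

lemma tm_four_mul (a : ℕ) : tm (4 * a) = tm a := by
  rw [show 4 * a = 2 * (2 * a) by ring, tm_two_mul, tm_two_mul]

lemma tm_four_mul_add_one (a : ℕ) : tm (4 * a + 1) + tm a = 1 := by
  rw [show 4 * a + 1 = 2 * (2 * a) + 1 by ring]
  have h1 := tm_two_mul_add_one (2 * a)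
  rw [tm_two_mul] at h1
  exact h1

lemma tm_four_mul_add_two (a : ℕ) : tm (4 * a + 2) + tm a = 1 := by
  rw [show 4 * a + 2 = 2 * (2 * a + 1) by ring, tm_two_mul]
  exact tm_two_mul_add_one a

lemma tm_four_mul_add_three (a : ℕ) : tm (4 * a + 3) = tm a := by
  have h1 : tm (4 * a + 3) + tm (2 * a + 1) = 1 := by
    rw [show 4 * a + 3 = 2 * (2 * a + 1) + 1 by ring]
    exact tm_two_mul_add_one (2 * a + 1)
  have h2 := tm_two_mul_add_one a
  have := tm_lt_two (4 * a + 3)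
  have := tm_lt_two a
  omega

/-! ### Index-level palindromes in the Thue–Morse word -/

/-- `Pal j n` says that the factor `t[j..n)` of the Thue–Morse word is a palindrome. -/
def Pal (j n : ℕ) : Prop := ∀ a b : ℕ, j ≤ a → a < n → a + b + 1 = j + n → tm a = tm b

lemma pal_single (j : ℕ) : Pal j (j + 1) := by
  intro a b h1 h2 h3
  have ha : a = j := by omega
  have hb : b = j := by omega
  rw [ha, hb]

lemma pal_inner {j n : ℕ} (h : Pal j (n + 1)) : Pal (j + 1) n := by
  intro a b h1 h2 h3
  exact h a b (by omega) (by omega) (by omega)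

lemma pal_extend {j n : ℕ} (h : Pal (j + 1) n) (ht : tm j = tm n) : Pal j (n + 1) := by
  intro a b h1 h2 h3
  by_cases haj : a = j
  · have hb : b = n := by omega
    rw [haj, hb]; exact ht
  · by_cases han : a = n
    · have hb : b = j := by omega
      rw [han, hb]; exact ht.symm
    · exact h a b (by omega) (by omega) (by omega)

lemma pal_first_last {j n : ℕ} (h : Pal j (n + 1)) (hjn : j ≤ n) : tm j = tm n :=
  h j n le_rfl (by omega) (by omega)

lemma pal_even {j n : ℕ} (h : Pal j n) (hjn : j < n) (hpar : (j + n) % 2 = 0) :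
    (j + n) % 4 = 0 := by
  have hn2 : j + 2 ≤ n := by omega
  obtain ⟨i, hi⟩ : ∃ i, j + n = 2 * i + 2 := ⟨(j + n - 2) / 2, by omega⟩
  have hadj : tm i = tm (i + 1) := h i (i + 1) (by omega) (by omega) (by omega)
  have := tm_adj hadj
  omega

lemma pal_odd_big {j n : ℕ} (h : Pal j n) (hpar : (j + n) % 2 = 1) (hlen : j + 5 ≤ n) :
    False := by
  obtain ⟨d, hd⟩ : ∃ d, j + n = 2 * d + 5 := ⟨(j + n - 5) / 2, by omega⟩
  have hdj : j ≤ d := by omega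
  have hdn : d + 4 < n := by omega
  have h1 : tm (d + 1) = tm (d + 3) := h (d + 1) (d + 3) (by omega) (by omega) (by omega)
  have h2 : tm d = tm (d + 4) := h d (d + 4) (by omega) (by omega) (by omega)
  rcases Nat.even_or_odd d with ⟨k, hk⟩ | ⟨k, hk⟩
  · -- d = 2k
    have hk' : d = 2 * k := by omega
    subst hk'
    have e1 : tm (2 * k) = tm k := tm_two_mul k
    have e2 : tm (2 * k + 4) = tm (k + 2) := by
      rw [show 2 * k + 4 = 2 * (k + 2) by ring]; exact tm_two_mul (k + 2)
    have e3 : tm (2 * k + 1) + tm k = 1 := tm_two_mul_add_one k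
    have e4 : tm (2 * k + 3) + tm (k + 1) = 1 := by
      rw [show 2 * k + 3 = 2 * (k + 1) + 1 by ring]; exact tm_two_mul_add_one (k + 1)
    have hkk1 : tm k = tm (k + 1) := by
      have := tm_lt_two (2 * k + 1); have := tm_lt_two (2 * k + 3)
      have := tm_lt_two k; have := tm_lt_two (k + 1); omega
    have hkk2 : tm (k + 1) = tm (k + 2) := by
      have := tm_lt_two k; have := tm_lt_two (k + 2); omega
    have o1 := tm_adj hkk1
    have o2 := tm_adj hkk2
    omega
  · -- d = 2k+1
    have hk' : d = 2 * k + 1 := by omega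
    subst hk'
    have e1 : tm (2 * k + 1) + tm k = 1 := tm_two_mul_add_one k
    have e2 : tm (2 * k + 1 + 4) + tm (k + 2) = 1 := by
      rw [show 2 * k + 1 + 4 = 2 * (k + 2) + 1 by ring]; exact tm_two_mul_add_one (k + 2)
    have e3 : tm (2 * k + 1 + 1) = tm (k + 1) := by
      rw [show 2 * k + 1 + 1 = 2 * (k + 1) by ring]; exact tm_two_mul (k + 1)
    have e4 : tm (2 * k + 1 + 3) = tm (k + 2) := by
      rw [show 2 * k + 1 + 3 = 2 * (k + 2) by ring]; exact tm_two_mul (k + 2)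
    have hkk2 : tm (k + 1) = tm (k + 2) := by rw [← e3, ← e4]; exact h1
    have hkk1 : tm k = tm (k + 1) := by
      have := tm_lt_two (2 * k + 1); have := tm_lt_two (2 * k + 5)
      have := tm_lt_two k; have := tm_lt_two (k + 2); omega
    have o1 := tm_adj hkk1
    have o2 := tm_adj hkk2
    omega

lemma pal_block3 (a : ℕ) : ¬ Pal (4 * a) (4 * a + 3) := by
  intro h
  have h1 : tm (4 * a) = tm (4 * a + 2) := h (4 * a) (4 * a + 2) le_rfl (by omega) (by omega)
  have h2 := tm_four_mul a
  have h3 := tm_four_mul_add_two a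
  have := tm_lt_two a
  omega

lemma pal_block4 (a : ℕ) : Pal (4 * a) (4 * a + 4) := by
  intro x y h1 h2 h3
  have e0 := tm_four_mul a
  have e1 := tm_four_mul_add_one a
  have e2 := tm_four_mul_add_two a
  have e3 := tm_four_mul_add_three a
  have := tm_lt_two a
  have hx : x = 4 * a ∨ x = 4 * a + 1 ∨ x = 4 * a + 2 ∨ x = 4 * a + 3 := by omega
  rcases hx with rfl | rfl | rfl | rfl
  · have hy : y = 4 * a + 3 := by omega
    rw [hy]; omega
  · have hy : y = 4 * a + 2 := by omega
    rw [hy]; omega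
  · have hy : y = 4 * a + 1 := by omega
    rw [hy]; omega
  · have hy : y = 4 * a := by omega
    rw [hy]; omega
/-! ### The word and its factors -/

def W (n : ℕ) : List ℕ := (List.range n).map tm

def Seg (j m : ℕ) : List ℕ := (List.range' j m).map tm

lemma ppl_def (n : ℕ) : pplTM n = palLen (W n) := rfl

@[simp] lemma W_length (n : ℕ) : (W n).length = n := by simp [W]

@[simp] lemma Seg_length (j m : ℕ) : (Seg j m).length = m := by simp [Seg]

lemma W_split {j n : ℕ} (h : j ≤ n) : W n = W j ++ Seg j (n - j) := by
  unfold W Seg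
  rw [List.range_eq_range', List.range_eq_range', ← List.map_append]
  congr 1
  have := List.range'_append (s := 0) (m := j) (n := n - j) (step := 1)
  simp only [Nat.zero_add, Nat.one_mul] at this
  rw [this]
  congr 1
  omega

lemma Seg_getElem? {j m i : ℕ} (h : i < m) : (Seg j m)[i]? = some (tm (j + i)) := by
  simp [Seg, List.getElem?_map, List.getElem?_range', h]

lemma Seg_pal_iff (j m : ℕ) : (Seg j m).Palindrome ↔ Pal j (j + m) := by
  rw [List.Palindrome.iff_reverse_eq]
  constructor
  · intro h a b ha hab hsum
    have hi : a - j < m := by omega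
    have hi' : m - 1 - (a - j) < m := by omega
    have key : (Seg j m)[a - j]? = (Seg j m)[m - 1 - (a - j)]? := by
      conv_lhs => rw [← h]
      rw [List.getElem?_reverse (by simpa using hi)]
      simp
    rw [Seg_getElem? hi, Seg_getElem? hi'] at key
    have e1 : j + (a - j) = a := by omega
    have e2 : j + (m - 1 - (a - j)) = b := by omega
    rw [e1, e2] at key
    exact Option.some_injective _ key
  · intro h
    apply List.ext_getElem?
    intro i
    by_cases hi : i < m
    · rw [List.getElem?_reverse (by simpa using hi)]
      simp only [Seg_length, List.length_reverse]
      rw [Seg_getElem? hi, Seg_getElem? (show m - 1 - i < m by omega)]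
      congr 1
      exact h (j + (m - 1 - i)) (j + i) (by omega) (by omega) (by omega)
    · rw [List.getElem?_eq_none (by simpa using hi),
        List.getElem?_eq_none (by simp; omega)]

/-! ### Basic facts about `palLen` -/

lemma palLen_set_nonempty (w : List ℕ) :
    Set.Nonempty {k | ∃ ps, ps.length = k ∧ IsPalDecomp w ps} := by
  refine ⟨w.length, w.map (fun a => [a]), by simp, ?_, ?_⟩
  · induction w with
    | nil => simp
    | cons a l ih => simpa using ih
  · intro p hp
    simp only [List.mem_map] at hp
    obtain ⟨a, -, rfl⟩ := hp
    exact ⟨by simp, List.Palindrome.singleton a⟩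

lemma palLen_spec (w : List ℕ) : ∃ ps, ps.length = palLen w ∧ IsPalDecomp w ps :=
  Nat.sInf_mem (palLen_set_nonempty w)

lemma palLen_le {w : List ℕ} (ps : List (List ℕ)) (h : IsPalDecomp w ps) :
    palLen w ≤ ps.length :=
  Nat.sInf_le ⟨ps, rfl, h⟩

lemma palLen_append_le {u p : List ℕ} (hne : p ≠ []) (hp : p.Palindrome) :
    palLen (u ++ p) ≤ palLen u + 1 := by
  obtain ⟨ps, hlen, hfl, hall⟩ := palLen_spec u
  have hd : IsPalDecomp (u ++ p) (ps ++ [p]) := by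
    refine ⟨by simp [hfl], ?_⟩
    intro q hq
    rcases List.mem_append.mp hq with h1 | h1
    · exact hall q h1
    · simp only [List.mem_singleton] at h1
      subst h1
      exact ⟨hne, hp⟩
  have := palLen_le _ hd
  simpa [hlen] using this

/-! ### Step lemmas for `pplTM` -/

lemma ppl_le {j n : ℕ} (hjn : j < n) (hp : Pal j n) : pplTM n ≤ pplTM j + 1 := by
  rw [ppl_def, ppl_def, W_split (le_of_lt hjn)]
  apply palLen_append_le
  · intro h
    have := congrArg List.length h
    simp at this
    omega
  · rw [Seg_pal_iff]
    have e : j + (n - j) = n := by omega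
    rw [e]
    exact hp

lemma ppl_exists {n : ℕ} (hn : 0 < n) :
    ∃ j, j < n ∧ Pal j n ∧ pplTM j + 1 = pplTM n := by
  obtain ⟨ps, hlen, hfl, hall⟩ := palLen_spec (W n)
  have hps : ps ≠ [] := by
    rintro rfl
    have := congrArg List.length hfl
    simp at this
    omega
  set p := ps.getLast hps with hpdef
  have hsplit : ps.dropLast ++ [p] = ps := List.dropLast_append_getLast hps
  set u := ps.dropLast.flatten with hudef
  have hup : u ++ p = W n := by
    have : (ps.dropLast ++ [p]).flatten = u ++ p := by simp [hudef]
    rw [hsplit] at this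
    rw [← this, hfl]
  have hpprop : p ≠ [] ∧ p.Palindrome := hall p (List.getLast_mem hps)
  have hulen : u.length + p.length = n := by
    have := congrArg List.length hup
    simpa using this
  set j := u.length with hjdef
  have hjn : j < n := by
    have : 0 < p.length := List.length_pos_iff.mpr hpprop.1
    omega
  have hW : u ++ p = W j ++ Seg j (n - j) := by rw [hup]; exact W_split (le_of_lt hjn)
  obtain ⟨hu, hp2⟩ := List.append_inj hW (by simp [hjdef])
  refine ⟨j, hjn, ?_, ?_⟩
  · have := hpprop.2
    rw [hp2] at this
    rw [Seg_pal_iff] at this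
    have e : j + (n - j) = n := by omega
    rwa [e] at this
  · -- pplTM j + 1 = pplTM n
    have le1 : pplTM n ≤ pplTM j + 1 := by
      rw [ppl_def, ppl_def, W_split (le_of_lt hjn)]
      apply palLen_append_le (by rw [← hp2]; exact hpprop.1)
      rw [← hp2]; exact hpprop.2
    have le2 : pplTM j ≤ ps.dropLast.length := by
      rw [ppl_def, ← hu]
      apply palLen_le
      refine ⟨rfl, ?_⟩
      intro q hq
      exact hall q ((List.dropLast_sublist ps).subset hq)
    have hdl : ps.dropLast.length = ps.length - 1 := by simp
    have hp1 : 1 ≤ ps.length := List.length_pos_iff.mpr hps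
    have hlen' : ps.length = pplTM n := hlen
    omega

lemma ppl_step_up (n : ℕ) : pplTM (n + 1) ≤ pplTM n + 1 :=
  ppl_le (Nat.lt_succ_self n) (pal_single n)

lemma ppl_step_down (n : ℕ) : pplTM n ≤ pplTM (n + 1) + 1 := by
  obtain ⟨j, hj, hpal, heq⟩ := ppl_exists (show 0 < n + 1 by omega)
  by_cases hjn : j = n
  · rw [hjn] at heq; omega
  · have hjn' : j < n := by omega
    have inner : Pal (j + 1) n := pal_inner hpal
    by_cases h1 : j + 1 = n
    · have := ppl_step_up j
      rw [h1] at this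
      omega
    · have := ppl_le (show j + 1 < n by omega) inner
      have := ppl_step_up j
      omega

lemma pal_single' (j : ℕ) : Pal j (j + 1) := pal_single j

/-! ### Helpers for index normalization -/

lemma pal_cast {j n : ℕ} (j' n' : ℕ) (h : Pal j n) (e1 : j = j') (e2 : n = n') :
    Pal j' n' := by rw [← e1, ← e2]; exact h

lemma ppl_step_up' (a b : ℕ) (h : b = a + 1) : pplTM b ≤ pplTM a + 1 := by
  rw [h]; exact ppl_step_up a

lemma ppl_step_down' (a b : ℕ) (h : b = a + 1) : pplTM a ≤ pplTM b + 1 := by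
  rw [h]; exact ppl_step_down a

/-! ### The main simultaneous induction -/

theorem ppl_main (n : ℕ) :
    pplTM (4 * n + 1) = pplTM (4 * n) + 1 ∧
    pplTM (4 * n) + 1 ≤ pplTM (4 * n + 2) ∧
    pplTM (4 * n + 4) + 1 ≤ pplTM (4 * n + 2) ∧
    pplTM (4 * n + 2) = min (pplTM (4 * n)) (pplTM (4 * n + 4)) + 2 ∧
    pplTM (4 * n + 3) = pplTM (4 * n + 4) + 1 := by
  induction n using Nat.strong_induction_on with
  | _ n IH =>
  -- Statement A : pplTM (4n+1) = pplTM (4n) + 1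
  have hA : pplTM (4 * n + 1) = pplTM (4 * n) + 1 := by
    have hub : pplTM (4 * n + 1) ≤ pplTM (4 * n) + 1 := ppl_step_up (4 * n)
    obtain ⟨j, hj, hpal, heq⟩ := ppl_exists (show 0 < 4 * n + 1 by omega)
    by_cases hpar : (j + (4 * n + 1)) % 2 = 0
    · -- even-length last palindrome : j ≡ 3 (mod 4)
      have h4 := pal_even hpal hj hpar
      obtain ⟨b, hb, hbn⟩ : ∃ b, j = 4 * b + 3 ∧ b < n := ⟨j / 4, by omega, by omega⟩
      have hBb : pplTM (4 * b + 3) = pplTM (4 * b + 4) + 1 := (IH b hbn).2.2.2.2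
      have hpal' : Pal (4 * b + 3) (4 * n + 1) := by rw [← hb]; exact hpal
      have inner : Pal (4 * b + 4) (4 * n) :=
        pal_cast _ _ (pal_inner hpal') (by ring) rfl
      have hPj : pplTM (4 * b + 3) + 1 = pplTM (4 * n + 1) := by rw [← hb]; exact heq
      by_cases hb4 : 4 * b + 4 = 4 * n
      · have he : pplTM (4 * b + 4) = pplTM (4 * n) := by rw [hb4]
        omega
      · have hlow := ppl_le (show 4 * b + 4 < 4 * n by omega) inner
        omega
    · -- odd-length last palindrome : length 1 or 3
      have hno : ¬ (j + 5 ≤ 4 * n + 1) := fun hc => pal_odd_big hpal (by omega) hc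
      have hcases : j = 4 * n ∨ j + 2 = 4 * n := by omega
      rcases hcases with h1 | h1
      · rw [h1] at heq; omega
      · obtain ⟨m, hm, hjm⟩ : ∃ m, n = m + 1 ∧ j = 4 * m + 2 := ⟨n - 1, by omega, by omega⟩
        have hBm : pplTM (4 * m + 3) = pplTM (4 * m + 4) + 1 := (IH m (by omega)).2.2.2.2
        have hstep : pplTM (4 * m + 3) ≤ pplTM (4 * m + 2) + 1 :=
          ppl_step_up' _ _ (by ring)
        rw [hm] at hub heq ⊢
        rw [hjm] at heq
        simp only [show 4 * (m + 1) + 1 = 4 * m + 5 by ring,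
          show 4 * (m + 1) = 4 * m + 4 by ring] at hub heq ⊢
        omega
  -- Statement C : the three inequalities around 4n+2
  have hC : pplTM (4 * n) + 1 ≤ pplTM (4 * n + 2) ∧
      pplTM (4 * n + 4) + 1 ≤ pplTM (4 * n + 2) ∧
      pplTM (4 * n + 2) = min (pplTM (4 * n)) (pplTM (4 * n + 4)) + 2 := by
    have up1 : pplTM (4 * n + 2) ≤ pplTM (4 * n) + 2 := by
      have h1 := ppl_step_up (4 * n)
      have h2 : pplTM (4 * n + 2) ≤ pplTM (4 * n + 1) + 1 := ppl_step_up' _ _ (by ring)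
      omega
    have up2 : pplTM (4 * n + 2) ≤ pplTM (4 * n + 4) + 2 := by
      have h1 : pplTM (4 * n + 2) ≤ pplTM (4 * n + 3) + 1 := ppl_step_down' _ _ (by ring)
      have h2 : pplTM (4 * n + 3) ≤ pplTM (4 * n + 4) + 1 := ppl_step_down' _ _ (by ring)
      omega
    have key : pplTM (4 * n) + 1 ≤ pplTM (4 * n + 2) ∧
        pplTM (4 * n + 4) + 1 ≤ pplTM (4 * n + 2) ∧
        min (pplTM (4 * n)) (pplTM (4 * n + 4)) + 2 ≤ pplTM (4 * n + 2) := by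
      obtain ⟨j, hj, hpal, heq⟩ := ppl_exists (show 0 < 4 * n + 2 by omega)
      by_cases hpar : (j + (4 * n + 2)) % 2 = 0
      · -- even-length last palindrome : j = 4a+2 with a < n
        have h4 := pal_even hpal hj hpar
        obtain ⟨a, ha, han⟩ : ∃ a, j = 4 * a + 2 ∧ a < n := ⟨j / 4, by omega, by omega⟩
        obtain ⟨hAa, hC1a, hC2a, hC3a, hBa⟩ := IH a han
        subst ha
        have hfl : tm (4 * a + 2) = tm (4 * n + 1) :=
          pal_first_last (pal_cast _ (4 * n + 1 + 1) hpal rfl (by ring)) (by omega)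
        have htan : tm a = tm n := by
          have e1 := tm_four_mul_add_two a
          have e2 := tm_four_mul_add_one n
          have := tm_lt_two a; have := tm_lt_two n
          omega
        have ext1 : Pal (4 * a + 1) (4 * n + 3) := by
          have h' : Pal (4 * a + 1 + 1) (4 * n + 2) := pal_cast _ _ hpal (by ring) rfl
          have ht : tm (4 * a + 1) = tm (4 * n + 2) := by
            have e1 := tm_four_mul_add_one a
            have e2 := tm_four_mul_add_two n
            have := tm_lt_two a; have := tm_lt_two n
            omega
          exact pal_cast _ _ (pal_extend h' ht) rfl (by ring)
        have ext2 : Pal (4 * a) (4 * n + 4) := by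
          have ht : tm (4 * a) = tm (4 * n + 3) := by
            have e1 := tm_four_mul a
            have e2 := tm_four_mul_add_three n
            omega
          exact pal_cast _ _ (pal_extend ext1 ht) rfl (by ring)
        have bext : pplTM (4 * n + 4) ≤ pplTM (4 * a) + 1 := ppl_le (by omega) ext2
        have inner1 : Pal (4 * a + 3) (4 * n + 1) :=
          pal_cast _ _ (pal_inner (pal_cast _ (4 * n + 1 + 1) hpal rfl (by ring)))
            (by ring) rfl
        have inner2 : Pal (4 * a + 4) (4 * n) :=
          pal_cast _ _ (pal_inner (pal_cast _ (4 * n + 1) inner1 rfl (by ring)))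
            (by ring) rfl
        have binn : pplTM (4 * n) ≤ pplTM (4 * a + 4) + 1 := by
          by_cases h44 : 4 * a + 4 = 4 * n
          · rw [h44]; omega
          · exact ppl_le (by omega) inner2
        omega
      · -- odd-length last palindrome : length 1 or 3
        have hno : ¬ (j + 5 ≤ 4 * n + 2) := fun hc => pal_odd_big hpal (by omega) hc
        have hcases : j = 4 * n + 1 ∨ j + 1 = 4 * n := by omega
        have hPj : pplTM j = pplTM (4 * n) + 1 := by
          rcases hcases with h1 | h1
          · rw [h1]; exact hA
          · obtain ⟨m, hm, hjm⟩ : ∃ m, n = m + 1 ∧ j = 4 * m + 3 :=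
              ⟨n - 1, by omega, by omega⟩
            have hBm : pplTM (4 * m + 3) = pplTM (4 * m + 4) + 1 := (IH m (by omega)).2.2.2.2
            rw [hjm, hm, show 4 * (m + 1) = 4 * m + 4 by ring]
            exact hBm
        have hblock : pplTM (4 * n + 4) ≤ pplTM (4 * n) + 1 :=
          ppl_le (by omega) (pal_block4 n)
        omega
    exact ⟨key.1, key.2.1, by omega⟩
  -- Statement B : pplTM (4n+3) = pplTM (4n+4) + 1
  have hB : pplTM (4 * n + 3) = pplTM (4 * n + 4) + 1 := by
    have hub : pplTM (4 * n + 3) ≤ pplTM (4 * n + 4) + 1 := ppl_step_down' _ _ (by ring)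
    obtain ⟨j, hj, hpal, heq⟩ := ppl_exists (show 0 < 4 * n + 3 by omega)
    by_cases hpar : (j + (4 * n + 3)) % 2 = 0
    · -- even-length last palindrome : j = 4b+1 with b ≤ n
      have h4 := pal_even hpal hj hpar
      obtain ⟨b, hb, hbn⟩ : ∃ b, j = 4 * b + 1 ∧ b ≤ n := ⟨j / 4, by omega, by omega⟩
      have hAb : pplTM (4 * b + 1) = pplTM (4 * b) + 1 := by
        rcases eq_or_lt_of_le hbn with h1 | h1
        · rw [h1]; exact hA
        · exact (IH b h1).1
      subst hb
      have hfl : tm (4 * b + 1) = tm (4 * n + 2) :=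
        pal_first_last (pal_cast _ (4 * n + 2 + 1) hpal rfl (by ring)) (by omega)
      have htan : tm b = tm n := by
        have e1 := tm_four_mul_add_one b
        have e2 := tm_four_mul_add_two n
        have := tm_lt_two b; have := tm_lt_two n
        omega
      have ext : Pal (4 * b) (4 * n + 4) := by
        have ht : tm (4 * b) = tm (4 * n + 3) := by
          have e1 := tm_four_mul b
          have e2 := tm_four_mul_add_three n
          omega
        exact pal_cast _ _ (pal_extend hpal ht) rfl (by ring)
      have hb4 : pplTM (4 * n + 4) ≤ pplTM (4 * b) + 1 := ppl_le (by omega) ext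
      omega
    · -- odd-length last palindrome
      have hno : ¬ (j + 5 ≤ 4 * n + 3) := fun hc => pal_odd_big hpal (by omega) hc
      have hcases : j = 4 * n + 2 ∨ j = 4 * n := by omega
      rcases hcases with h1 | h1
      · rw [h1] at heq
        have := hC.2.1
        omega
      · exfalso
        rw [h1] at hpal
        exact pal_block3 n hpal
  exact ⟨hA, hC.1, hC.2.1, hC.2.2, hB⟩

/-- For every `N ≥ 0` and every `m ∈ {1, 2, 3}`,
`PPL_t(4N + m) = min(PPL_t(4N + m − 1), PPL_t(4N + m + 1)) + 1`. -/
theorem pplTM_middle_min (N m : ℕ) (hm : m ∈ ({1, 2, 3} : Set ℕ)) :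
    pplTM (4 * N + m) =
      min (pplTM (4 * N + m - 1)) (pplTM (4 * N + m + 1)) + 1 := by
  obtain ⟨hA, hC1, hC2, hC3, hB⟩ := ppl_main N
  simp only [Set.mem_insert_iff, Set.mem_singleton_iff] at hm
  rcases hm with rfl | rfl | rfl
  · rw [show 4 * N + 1 - 1 = 4 * N by omega, show 4 * N + 1 + 1 = 4 * N + 2 by ring]
    omega
  · rw [show 4 * N + 2 - 1 = 4 * N + 1 by omega, show 4 * N + 2 + 1 = 4 * N + 3 by ring]
    omega
  · rw [show 4 * N + 3 - 1 = 4 * N + 2 by omega, show 4 * N + 3 + 1 = 4 * N + 4 by ring]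
    omega
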